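/- Equality case: with Θ = V_F V_G^H and Q = U_G diag(q_1,…,q_{N_t}) U_G^H where q_1 ≥ … ≥ q_{N_t} ≥ 0, the matrix H Q H^H = U_F D_F D_G^H diag(q_1,…,q_{N_t}) D_G D_F^H U_F^H has i-th largest eigenvalue q_i σ_i(F)² σ_i(G^H)² for i = 1,…,K, so det(I + (1/N₀) H Q H^H) = ∏_{i=1}^K (1 + q_i σ_i(F)² σ_i(G^H)²/N₀). -/

import Mathlib

open Matrix

/-- The `i`-th largest singular value of a complex matrix `A`: the square root of the
`i`-th largest eigenvalue of `Aᴴ A` (eigenvalues sorted in decreasing order). -/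
noncomputable def sval {n m : ℕ} (A : Matrix (Fin n) (Fin m) ℂ) (i : Fin m) : ℝ :=
  Real.sqrt ((Matrix.isHermitian_conjTranspose_mul_self A).eigenvalues
    (Tuple.sort (Matrix.isHermitian_conjTranspose_mul_self A).eigenvalues i.rev))

open Polynomial
lemma mono_tuple_eq {n : ℕ} {f g : Fin n → ℝ} (hf : Monotone f) (hg : Monotone g)
    (h : Finset.univ.val.map f = Finset.univ.val.map g) : f = g := by
  have hperm : (List.ofFn f).Perm (List.ofFn g) := by
    rw [← Multiset.coe_eq_coe, ← Fin.univ_val_map, ← Fin.univ_val_map]; exact_mod_cast h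
  exact List.ofFn_injective (List.Perm.eq_of_sortedLE hf.sortedLE_ofFn hg.sortedLE_ofFn hperm)

lemma charpoly_unitary_conj {n : ℕ} (U D : Matrix (Fin n) (Fin n) ℂ)
    (h1 : U * Uᴴ = 1) : (U * D * Uᴴ).charpoly = D.charpoly := by
  have hone : (U.map (C : ℂ →+* ℂ[X])) * (Uᴴ.map (C : ℂ →+* ℂ[X])) = 1 := by
    rw [← Matrix.map_mul, h1]
    exact Matrix.map_one _ (map_zero C) (map_one C)
  have key : charmatrix (U * D * Uᴴ)
      = U.map (C : ℂ →+* ℂ[X]) * charmatrix D * Uᴴ.map (C : ℂ →+* ℂ[X]) := by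
    unfold charmatrix
    simp only [RingHom.mapMatrix_apply]
    rw [Matrix.mul_sub, Matrix.sub_mul]
    congr 1
    · rw [scalar_apply, ← Matrix.smul_one_eq_diagonal, Matrix.mul_smul, Matrix.smul_mul,
        Matrix.mul_one, hone]
    · rw [Matrix.map_mul, Matrix.map_mul]
  unfold Matrix.charpoly
  rw [key, det_mul, det_mul]
  have h2 : (U.map (C : ℂ →+* ℂ[X])).det * (Uᴴ.map (C : ℂ →+* ℂ[X])).det = 1 := by
    rw [← det_mul, hone, det_one]
  calc (U.map (C : ℂ →+* ℂ[X])).det * (charmatrix D).det * (Uᴴ.map (C : ℂ →+* ℂ[X])).det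
      = (charmatrix D).det
        * ((U.map (C : ℂ →+* ℂ[X])).det * (Uᴴ.map (C : ℂ →+* ℂ[X])).det) := by ring
    _ = (charmatrix D).det := by rw [h2, mul_one]

lemma roots_charpoly_diagonal {n : ℕ} (v : Fin n → ℂ) :
    (Matrix.diagonal v).charpoly.roots = Finset.univ.val.map v := by
  have hcm : charmatrix (Matrix.diagonal v) = Matrix.diagonal (fun i => X - C (v i)) := by
    ext i j
    rw [charmatrix_apply]
    by_cases hij : i = j
    · subst hij; simp
    · simp [Matrix.diagonal_apply_ne _ hij]
  have h : (Matrix.diagonal v).charpoly = ∏ i : Fin n, (X - C (v i)) := by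
    unfold Matrix.charpoly
    rw [hcm, det_diagonal]
  rw [h, Finset.prod_eq_multiset_prod]
  have hmm : Multiset.map (fun i => X - C (v i)) Finset.univ.val
      = Multiset.map (fun a => X - C a) (Multiset.map v Finset.univ.val) := by
    rw [Multiset.map_map]; rfl
  rw [hmm, Polynomial.roots_multiset_prod_X_sub_C]

lemma eig_sorted {n : ℕ} {A : Matrix (Fin n) (Fin n) ℂ} (hA : A.IsHermitian)
    (U : Matrix (Fin n) (Fin n) ℂ) (hU' : U * Uᴴ = 1)
    (d : Fin n → ℝ) (hd : Antitone d)
    (h : A = U * Matrix.diagonal (fun i => ((d i : ℝ) : ℂ)) * Uᴴ) :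
    hA.eigenvalues ∘ (Tuple.sort hA.eigenvalues) = d ∘ Fin.rev := by
  set V : Matrix (Fin n) (Fin n) ℂ := (hA.eigenvectorUnitary : Matrix (Fin n) (Fin n) ℂ) with hV
  have hVu : V * Vᴴ = 1 := by
    have := hA.eigenvectorUnitary.2
    rw [Unitary.mem_iff] at this
    simpa [hV, star_eq_conjTranspose] using this.2
  have hspec : A = V * Matrix.diagonal (fun i => ((hA.eigenvalues i : ℝ) : ℂ)) * Vᴴ := by
    have := hA.spectral_theorem
    simpa [hV, star_eq_conjTranspose, Function.comp_def] using this
  have h1 : A.charpoly.roots = Finset.univ.val.map (fun i => ((hA.eigenvalues i : ℝ) : ℂ)) := by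
    conv_lhs => rw [hspec]
    rw [charpoly_unitary_conj _ _ hVu, roots_charpoly_diagonal]
  have h2 : A.charpoly.roots = Finset.univ.val.map (fun i => ((d i : ℝ) : ℂ)) := by
    conv_lhs => rw [h]
    rw [charpoly_unitary_conj _ _ hU', roots_charpoly_diagonal]
  have h3 : Finset.univ.val.map hA.eigenvalues = Finset.univ.val.map d := by
    apply Multiset.map_injective Complex.ofReal_injective
    rw [Multiset.map_map, Multiset.map_map]
    exact (h1.symm.trans h2 :)
  have hm1 : Monotone (hA.eigenvalues ∘ Tuple.sort hA.eigenvalues) := Tuple.monotone_sort _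
  have hrev : Antitone (Fin.rev : Fin n → Fin n) := fun a b hab => Fin.rev_le_rev.mpr hab
  have hm2 : Monotone (d ∘ Fin.rev) := hd.comp hrev
  apply mono_tuple_eq hm1 hm2
  have e1 : Finset.univ.val.map (hA.eigenvalues ∘ (Tuple.sort hA.eigenvalues : Equiv.Perm (Fin n)))
      = Finset.univ.val.map hA.eigenvalues := by
    rw [← Multiset.map_map, Multiset.map_univ_val_equiv]
  have e2 : Finset.univ.val.map (d ∘ Fin.rev) = Finset.univ.val.map d := by
    rw [show (Fin.rev : Fin n → Fin n) = ⇑(Fin.revPerm : Equiv.Perm (Fin n)) from rfl,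
      ← Multiset.map_map, Multiset.map_univ_val_equiv]
  rw [e1, e2, h3]

lemma sval_spec {n m : ℕ} (A : Matrix (Fin n) (Fin m) ℂ)
    (U : Matrix (Fin m) (Fin m) ℂ) (hU' : U * Uᴴ = 1)
    (d : Fin m → ℝ) (hd : Antitone d)
    (h : Aᴴ * A = U * Matrix.diagonal (fun i => ((d i : ℝ) : ℂ)) * Uᴴ) (i : Fin m) :
    sval A i = Real.sqrt (d i) := by
  unfold sval
  have := congrFun (eig_sorted (Matrix.isHermitian_conjTranspose_mul_self A) U hU' d hd h) i.rev
  simp only [Function.comp_apply, Fin.rev_rev] at this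
  rw [this]

def IsPD {a b : ℕ} (P : Matrix (Fin a) (Fin b) ℂ) (c : ℕ → ℂ) : Prop :=
  ∀ i j, P i j = if (i : ℕ) = (j : ℕ) then c i else 0

lemma IsPD.mul {a b c : ℕ} {P : Matrix (Fin a) (Fin b) ℂ} {Q : Matrix (Fin b) (Fin c) ℂ}
    {f g : ℕ → ℂ} (hP : IsPD P f) (hQ : IsPD Q g) :
    IsPD (P * Q) (fun t => if t < b then f t * g t else 0) := by
  intro i j
  rw [Matrix.mul_apply]
  by_cases hib : (i : ℕ) < b
  · rw [Finset.sum_eq_single (⟨(i : ℕ), hib⟩ : Fin b)]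
    · rw [hP, hQ]
      simp only [hib, if_true]
      by_cases hij : (i : ℕ) = (j : ℕ) <;> simp [hij]
    · intro k _ hk
      rw [hP]
      have : (i : ℕ) ≠ (k : ℕ) := fun hc => hk (by ext; simp [← hc])
      simp [this]
    · intro hc; exact absurd (Finset.mem_univ _) hc
  · have hz : ∀ k : Fin b, P i k * Q k j = 0 := by
      intro k
      rw [hP]
      have : (i : ℕ) ≠ (k : ℕ) := by omega
      simp [this]
    rw [Finset.sum_congr rfl (fun k _ => hz k), Finset.sum_const, smul_zero]
    simp [hib]

lemma IsPD.conjTranspose {a b : ℕ} {P : Matrix (Fin a) (Fin b) ℂ} {f : ℕ → ℂ}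
    (hP : IsPD P f) : IsPD Pᴴ (fun t => star (f t)) := by
  intro i j
  rw [Matrix.conjTranspose_apply, hP j i]
  by_cases h : (j : ℕ) = (i : ℕ)
  · rw [if_pos h, if_pos h.symm, h]
  · rw [if_neg h, if_neg (Ne.symm h), star_zero]

lemma IsPD.congr {a b : ℕ} {P : Matrix (Fin a) (Fin b) ℂ} {f g : ℕ → ℂ}
    (hP : IsPD P f) (h : ∀ t, t < a → f t = g t) : IsPD P g := by
  intro i j
  rw [hP, h i i.isLt]

lemma IsPD.eq_diagonal {a : ℕ} {P : Matrix (Fin a) (Fin a) ℂ} {f : ℕ → ℂ}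
    (hP : IsPD P f) : P = Matrix.diagonal (fun i : Fin a => f i) := by
  ext i j
  rw [hP, Matrix.diagonal_apply]
  by_cases h : i = j <;> simp [h, Fin.ext_iff]
  omega

lemma isPD_diagonal {a : ℕ} (v : Fin a → ℂ) :
    IsPD (Matrix.diagonal v) (fun t => if h : t < a then v ⟨t, h⟩ else 0) := by
  intro i j
  rw [Matrix.diagonal_apply]
  by_cases h : i = j
  · subst h; simp
  · rw [if_neg h, if_neg (by simpa [Fin.ext_iff] using h)]

lemma antitone_comp_val {n : ℕ} {h : ℕ → ℝ} (hh : Antitone h) :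
    Antitone (fun i : Fin n => h (i : ℕ)) :=
  fun a b hab => hh hab


/-- Equality case of the capacity bound: with `Θ = V_F V_Gᴴ` and
`Q = U_G diag(q₁,…,q_{N_t}) U_Gᴴ` (with `q₁ ≥ … ≥ q_{N_t} ≥ 0`), the matrix
`H Q Hᴴ = U_F D_F D_Gᴴ diag(q) D_G D_Fᴴ U_Fᴴ` has `i`-th largest eigenvalue
`q_i σ_i(F)² σ_i(Gᴴ)²`, so `det(I + (1/N₀) H Q Hᴴ) = ∏_{i=1}^K (1 + q_i σ_i(F)² σ_i(Gᴴ)²/N₀)`. -/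
theorem capacity_equality_case (M Nt Nr : ℕ) (N0 : ℝ) (hN0 : 0 < N0)
    (F : Matrix (Fin Nr) (Fin M) ℂ) (G : Matrix (Fin Nt) (Fin M) ℂ)
    (UF : Matrix (Fin Nr) (Fin Nr) ℂ) (UG : Matrix (Fin Nt) (Fin Nt) ℂ)
    (VF VG : Matrix (Fin M) (Fin M) ℂ)
    (DF : Matrix (Fin Nr) (Fin M) ℂ) (DG : Matrix (Fin Nt) (Fin M) ℂ)
    (dF dG : ℕ → ℝ)
    (hUF : UFᴴ * UF = 1) (hUF' : UF * UFᴴ = 1)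
    (hUG : UGᴴ * UG = 1) (hUG' : UG * UGᴴ = 1)
    (hVF : VFᴴ * VF = 1) (hVF' : VF * VFᴴ = 1)
    (hVG : VGᴴ * VG = 1) (hVG' : VG * VGᴴ = 1)
    (hdF : Antitone dF) (hdF0 : ∀ i, 0 ≤ dF i)
    (hdG : Antitone dG) (hdG0 : ∀ i, 0 ≤ dG i)
    (hDF : ∀ i j, DF i j = if (i : ℕ) = (j : ℕ) then ((dF i : ℝ) : ℂ) else 0)
    (hDG : ∀ i j, DG i j = if (i : ℕ) = (j : ℕ) then ((dG i : ℝ) : ℂ) else 0)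
    (hFsvd : F = UF * DF * VFᴴ) (hGsvd : G = UG * DG * VGᴴ)
    (q : Fin Nt → ℝ) (hq : Antitone q) (hq0 : ∀ i, 0 ≤ q i)
    (Θ : Matrix (Fin M) (Fin M) ℂ) (hΘ : Θ = VF * VGᴴ)
    (Q : Matrix (Fin Nt) (Fin Nt) ℂ)
    (hQ : Q = UG * Matrix.diagonal (fun i => ((q i : ℝ) : ℂ)) * UGᴴ)
    (H : Matrix (Fin Nr) (Fin Nt) ℂ) (hH : H = F * Θ * Gᴴ) :
    H * Q * Hᴴ =
      UF * (DF * DGᴴ * Matrix.diagonal (fun i => ((q i : ℝ) : ℂ)) * DG * DFᴴ) * UFᴴ ∧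
    (∀ i : Fin (min (min Nt Nr) M),
      sval (H * Q * Hᴴ) ⟨i, by omega⟩ =
        q ⟨i, by omega⟩ * (sval F ⟨i, by omega⟩) ^ 2 * (sval Gᴴ ⟨i, by omega⟩) ^ 2) ∧
    ‖(1 + ((N0⁻¹ : ℝ) : ℂ) • (H * Q * Hᴴ)).det‖ =
      ∏ i : Fin (min (min Nt Nr) M),
        (1 + q ⟨i, by omega⟩ * (sval F ⟨i, by omega⟩) ^ 2 *
          (sval Gᴴ ⟨i, by omega⟩) ^ 2 / N0) := by
  -- cancellation helpers
  have cVF : ∀ (k : ℕ) (X : Matrix (Fin M) (Fin k) ℂ), VFᴴ * (VF * X) = X := fun k X => by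
    rw [← Matrix.mul_assoc, hVF, Matrix.one_mul]
  have cVG : ∀ (k : ℕ) (X : Matrix (Fin M) (Fin k) ℂ), VGᴴ * (VG * X) = X := fun k X => by
    rw [← Matrix.mul_assoc, hVG, Matrix.one_mul]
  have cUG : ∀ (k : ℕ) (X : Matrix (Fin Nt) (Fin k) ℂ), UGᴴ * (UG * X) = X := fun k X => by
    rw [← Matrix.mul_assoc, hUG, Matrix.one_mul]
  have cUF : ∀ (k : ℕ) (X : Matrix (Fin Nr) (Fin k) ℂ), UFᴴ * (UF * X) = X := fun k X => by
    rw [← Matrix.mul_assoc, hUF, Matrix.one_mul]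
  -- step 1 : H in diagonal form
  have hH2 : H = UF * (DF * (DGᴴ * UGᴴ)) := by
    rw [hH, hFsvd, hGsvd, hΘ]
    simp only [Matrix.conjTranspose_mul, Matrix.conjTranspose_conjTranspose, Matrix.mul_assoc]
    rw [cVF, cVG]
  -- first conjunct
  have hc1 : H * Q * Hᴴ =
      UF * (DF * DGᴴ * Matrix.diagonal (fun i => ((q i : ℝ) : ℂ)) * DG * DFᴴ) * UFᴴ := by
    rw [hH2, hQ]
    simp only [Matrix.conjTranspose_mul, Matrix.conjTranspose_conjTranspose, Matrix.mul_assoc]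
    rw [cUG, cUG]
  -- pseudo-diagonal data
  set qe : ℕ → ℝ := fun t => if h : t < Nt then q ⟨t, h⟩ else 0 with hqe
  set β : ℕ → ℝ := fun t => if t < M then qe t * dF t ^ 2 * dG t ^ 2 else 0 with hβ
  have pDF : IsPD DF (fun t => ((dF t : ℝ) : ℂ)) := fun i j => hDF i j
  have pDG : IsPD DG (fun t => ((dG t : ℝ) : ℂ)) := fun i j => hDG i j
  have pDFH : IsPD DFᴴ (fun t => ((dF t : ℝ) : ℂ)) :=
    pDF.conjTranspose.congr (by intro t _; simp)
  have pDGH : IsPD DGᴴ (fun t => ((dG t : ℝ) : ℂ)) :=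
    pDG.conjTranspose.congr (by intro t _; simp)
  have pQ : IsPD (Matrix.diagonal (fun i : Fin Nt => ((q i : ℝ) : ℂ)))
      (fun t => ((qe t : ℝ) : ℂ)) :=
    (isPD_diagonal _).congr (by intro t ht; rw [dif_pos ht]; simp [hqe, dif_pos ht])
  have pB : IsPD (DF * DGᴴ * Matrix.diagonal (fun i : Fin Nt => ((q i : ℝ) : ℂ)) * DG * DFᴴ)
      (fun t => ((β t : ℝ) : ℂ)) := by
    refine ((((pDF.mul pDGH).mul pQ).mul pDG).mul pDFH).congr ?_
    intro t _
    by_cases hM : t < M <;> by_cases hNt : t < Nt <;>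
      simp [hM, hNt, hβ, hqe, dif_pos, dif_neg] <;> push_cast <;> ring
  have hBdiag : DF * DGᴴ * Matrix.diagonal (fun i : Fin Nt => ((q i : ℝ) : ℂ)) * DG * DFᴴ
      = Matrix.diagonal (fun i : Fin Nr => ((β (i : ℕ) : ℝ) : ℂ)) := pB.eq_diagonal
  have hAdiag : H * Q * Hᴴ = UF * Matrix.diagonal (fun i : Fin Nr => ((β (i : ℕ) : ℝ) : ℂ)) * UFᴴ := by
    rw [hc1, hBdiag]
  -- nonnegativity / antitonicity
  have hqe0 : ∀ t, 0 ≤ qe t := by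
    intro t; rw [hqe]; dsimp only; split
    · exact hq0 _
    · exact le_refl 0
  have hqeA : Antitone qe := by
    intro a b hab
    rw [hqe]; dsimp only
    by_cases hb : b < Nt
    · rw [dif_pos hb, dif_pos (lt_of_le_of_lt hab hb)]
      exact hq (by exact hab)
    · rw [dif_neg hb]
      exact hqe0 a
  have hβ0 : ∀ t, 0 ≤ β t := by
    intro t; rw [hβ]; dsimp only; split
    · have := hqe0 t; positivity
    · exact le_refl 0
  have hβA : Antitone β := by
    intro a b hab
    rw [hβ]; dsimp only
    by_cases hb : b < M
    · rw [if_pos hb, if_pos (lt_of_le_of_lt hab hb)]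
      have h2 : dF b ^ 2 ≤ dF a ^ 2 := pow_le_pow_left₀ (hdF0 b) (hdF hab) 2
      have h3 : dG b ^ 2 ≤ dG a ^ 2 := pow_le_pow_left₀ (hdG0 b) (hdG hab) 2
      have hga : 0 ≤ dG b ^ 2 := sq_nonneg _
      exact mul_le_mul (mul_le_mul (hqeA hab) h2 (sq_nonneg _)
        (hqe0 a)) h3 hga (by have := hqe0 a; positivity)
    · rw [if_neg hb]
      exact hβ0 a
  -- eigen data for F
  set eF : ℕ → ℝ := fun t => if t < Nr then dF t ^ 2 else 0 with heF
  set eG : ℕ → ℝ := fun t => if t < M then dG t ^ 2 else 0 with heG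
  have heF0 : ∀ t, 0 ≤ eF t := by
    intro t; rw [heF]; dsimp only; split
    · exact sq_nonneg _
    · exact le_refl 0
  have heG0 : ∀ t, 0 ≤ eG t := by
    intro t; rw [heG]; dsimp only; split
    · exact sq_nonneg _
    · exact le_refl 0
  have heFA : Antitone eF := by
    intro a b hab
    rw [heF]; dsimp only
    by_cases hb : b < Nr
    · rw [if_pos hb, if_pos (lt_of_le_of_lt hab hb)]
      exact pow_le_pow_left₀ (hdF0 b) (hdF hab) 2
    · rw [if_neg hb]; exact heF0 a
  have heGA : Antitone eG := by
    intro a b hab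
    rw [heG]; dsimp only
    by_cases hb : b < M
    · rw [if_pos hb, if_pos (lt_of_le_of_lt hab hb)]
      exact pow_le_pow_left₀ (hdG0 b) (hdG hab) 2
    · rw [if_neg hb]; exact heG0 a
  have pEF : IsPD (DFᴴ * DF) (fun t => ((eF t : ℝ) : ℂ)) := by
    refine (pDFH.mul pDF).congr ?_
    intro t _
    by_cases h : t < Nr <;> simp [h, heF] <;> push_cast <;> ring
  have pEG : IsPD (DG * DGᴴ) (fun t => ((eG t : ℝ) : ℂ)) := by
    refine (pDG.mul pDGH).congr ?_
    intro t _
    by_cases h : t < M <;> simp [h, heG] <;> push_cast <;> ring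
  have hFtF : Fᴴ * F = VF * Matrix.diagonal (fun i : Fin M => ((eF (i : ℕ) : ℝ) : ℂ)) * VFᴴ := by
    have step : Fᴴ * F = VF * ((DFᴴ * DF) * VFᴴ) := by
      rw [hFsvd]
      simp only [Matrix.conjTranspose_mul, Matrix.conjTranspose_conjTranspose, Matrix.mul_assoc]
      rw [cUF, ← Matrix.mul_assoc DFᴴ DF VFᴴ]
    rw [step, pEF.eq_diagonal, Matrix.mul_assoc]
  have hGtG : (Gᴴ)ᴴ * Gᴴ = UG * Matrix.diagonal (fun i : Fin Nt => ((eG (i : ℕ) : ℝ) : ℂ)) * UGᴴ := by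
    have step : (Gᴴ)ᴴ * Gᴴ = UG * ((DG * DGᴴ) * UGᴴ) := by
      rw [Matrix.conjTranspose_conjTranspose, hGsvd]
      simp only [Matrix.conjTranspose_mul, Matrix.conjTranspose_conjTranspose, Matrix.mul_assoc]
      rw [cVG, ← Matrix.mul_assoc DG DGᴴ UGᴴ]
    rw [step, pEG.eq_diagonal, Matrix.mul_assoc]
  have hAtA : (H * Q * Hᴴ)ᴴ * (H * Q * Hᴴ)
      = UF * Matrix.diagonal (fun i : Fin Nr => ((β (i : ℕ) ^ 2 : ℝ) : ℂ)) * UFᴴ := by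
    have hds : (Matrix.diagonal fun i : Fin Nr => ((β (i : ℕ) : ℝ) : ℂ))ᴴ
        = Matrix.diagonal fun i : Fin Nr => ((β (i : ℕ) : ℝ) : ℂ) := by
      ext i j
      rw [Matrix.conjTranspose_apply, Matrix.diagonal_apply, Matrix.diagonal_apply]
      by_cases h : i = j
      · subst h; simp [Complex.conj_ofReal]
      · rw [if_neg h, if_neg (fun hc => h hc.symm), star_zero]
    have hherm : (H * Q * Hᴴ)ᴴ = H * Q * Hᴴ := by
      rw [hAdiag]
      simp only [Matrix.conjTranspose_mul, Matrix.conjTranspose_conjTranspose, hds,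
        Matrix.mul_assoc]
    have hdd : (Matrix.diagonal fun i : Fin Nr => ((β (i : ℕ) : ℝ) : ℂ))
          * (Matrix.diagonal fun i : Fin Nr => ((β (i : ℕ) : ℝ) : ℂ))
        = Matrix.diagonal (fun i : Fin Nr => ((β (i : ℕ) ^ 2 : ℝ) : ℂ)) := by
      rw [Matrix.diagonal_mul_diagonal]
      congr 1
      funext i
      push_cast
      ring
    rw [hherm, hAdiag]
    simp only [Matrix.mul_assoc]
    rw [cUF, ← Matrix.mul_assoc (Matrix.diagonal fun i : Fin Nr => ((β (i : ℕ) : ℝ) : ℂ)), hdd]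
  -- singular values
  have svF : ∀ i : Fin M, sval F i = Real.sqrt (eF (i : ℕ)) :=
    fun i => sval_spec F VF hVF' (fun i : Fin M => eF (i : ℕ)) (antitone_comp_val heFA) hFtF i
  have svG : ∀ i : Fin Nt, sval Gᴴ i = Real.sqrt (eG (i : ℕ)) :=
    fun i => sval_spec Gᴴ UG hUG' (fun i : Fin Nt => eG (i : ℕ)) (antitone_comp_val heGA) hGtG i
  have hβsqA : Antitone (fun t => β t ^ 2) := by
    intro a b hab
    exact pow_le_pow_left₀ (hβ0 b) (hβA hab) 2
  have svA : ∀ i : Fin Nr, sval (H * Q * Hᴴ) i = β (i : ℕ) := by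
    intro i
    rw [sval_spec (H * Q * Hᴴ) UF hUF' (fun i : Fin Nr => β (i : ℕ) ^ 2)
      (antitone_comp_val hβsqA) hAtA i]
    exact Real.sqrt_sq (hβ0 _)
  have hiK : ∀ i : Fin (min (min Nt Nr) M), (i : ℕ) < Nt ∧ (i : ℕ) < Nr ∧ (i : ℕ) < M :=
    fun i => by have := i.isLt; omega
  have hc2 : ∀ i : Fin (min (min Nt Nr) M),
      sval (H * Q * Hᴴ) ⟨i, by omega⟩ =
        q ⟨i, by omega⟩ * (sval F ⟨i, by omega⟩) ^ 2 * (sval Gᴴ ⟨i, by omega⟩) ^ 2 := by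
    intro i
    obtain ⟨hiNt, hiNr, hiM⟩ := hiK i
    rw [svA, svF, svG, Real.sq_sqrt (heF0 _), Real.sq_sqrt (heG0 _)]
    simp [hβ, heF, heG, hqe, hiM, hiNr, hiNt]
  refine ⟨hc1, hc2, ?_⟩
  -- determinant computation
  have hdet1 : UF.det * UFᴴ.det = 1 := by rw [← Matrix.det_mul, hUF', Matrix.det_one]
  have hDdet : 1 + ((N0⁻¹ : ℝ) : ℂ) • (H * Q * Hᴴ)
      = UF * Matrix.diagonal (fun i : Fin Nr => ((1 + β (i : ℕ) / N0 : ℝ) : ℂ)) * UFᴴ := by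
    rw [hAdiag]
    have h1 : (1 : Matrix (Fin Nr) (Fin Nr) ℂ) = UF * 1 * UFᴴ := by
      rw [Matrix.mul_one, hUF']
    have h2 : ((N0⁻¹ : ℝ) : ℂ) • (UF * Matrix.diagonal (fun i : Fin Nr => ((β (i : ℕ) : ℝ) : ℂ)) * UFᴴ)
        = UF * (((N0⁻¹ : ℝ) : ℂ) • Matrix.diagonal (fun i : Fin Nr => ((β (i : ℕ) : ℝ) : ℂ))) * UFᴴ := by
      rw [Matrix.mul_smul, Matrix.smul_mul]
    have h3 : (1 : Matrix (Fin Nr) (Fin Nr) ℂ)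
          + ((N0⁻¹ : ℝ) : ℂ) • Matrix.diagonal (fun i : Fin Nr => ((β (i : ℕ) : ℝ) : ℂ))
        = Matrix.diagonal (fun i : Fin Nr => ((1 + β (i : ℕ) / N0 : ℝ) : ℂ)) := by
      ext i j
      by_cases h : i = j
      · subst h
        simp only [Matrix.add_apply, Matrix.one_apply_eq, Matrix.smul_apply,
          Matrix.diagonal_apply_eq, smul_eq_mul]
        push_cast
        ring
      · simp [Matrix.one_apply_ne h, Matrix.diagonal_apply_ne _ h]
    rw [h2]
    conv_lhs => rw [h1]
    rw [← Matrix.add_mul, ← Matrix.mul_add, h3]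
  rw [hDdet, Matrix.det_mul, Matrix.det_mul, Matrix.det_diagonal]
  have hPP : UF.det * (∏ i : Fin Nr, ((1 + β (i : ℕ) / N0 : ℝ) : ℂ)) * UFᴴ.det
      = ((∏ i : Fin Nr, (1 + β (i : ℕ) / N0) : ℝ) : ℂ) := by
    calc UF.det * (∏ i : Fin Nr, ((1 + β (i : ℕ) / N0 : ℝ) : ℂ)) * UFᴴ.det
        = (∏ i : Fin Nr, ((1 + β (i : ℕ) / N0 : ℝ) : ℂ)) * (UF.det * UFᴴ.det) := by ring
      _ = ∏ i : Fin Nr, ((1 + β (i : ℕ) / N0 : ℝ) : ℂ) := by rw [hdet1, mul_one]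
      _ = ((∏ i : Fin Nr, (1 + β (i : ℕ) / N0) : ℝ) : ℂ) := by rw [Complex.ofReal_prod]
  rw [hPP, Complex.norm_real, Real.norm_eq_abs]
  have hpos : 0 < ∏ i : Fin Nr, (1 + β (i : ℕ) / N0) := by
    apply Finset.prod_pos
    intro i _
    have := hβ0 (i : ℕ)
    positivity
  rw [abs_of_pos hpos]
  have hfac : ∀ i : Fin (min (min Nt Nr) M),
      (1 + q ⟨i, by omega⟩ * (sval F ⟨i, by omega⟩) ^ 2 * (sval Gᴴ ⟨i, by omega⟩) ^ 2 / N0)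
        = 1 + β (i : ℕ) / N0 := by
    intro i
    rw [← hc2 i, svA]
  rw [Finset.prod_congr rfl (fun i _ => hfac i)]
  rw [Fin.prod_univ_eq_prod_range (fun t => 1 + β t / N0) Nr,
    Fin.prod_univ_eq_prod_range (fun t => 1 + β t / N0) (min (min Nt Nr) M)]
  refine (Finset.prod_subset (Finset.range_subset_range.mpr (by omega)) ?_).symm
  intro x hx hnx
  rw [Finset.mem_range] at hx
  rw [Finset.mem_range] at hnx
  have hb : β x = 0 := by
    rw [hβ]; dsimp only
    by_cases hm : x < M
    · rw [if_pos hm]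
      have hnt : ¬ x < Nt := by omega
      simp [hqe, dif_neg hnt]
    · rw [if_neg hm]
  rw [hb]
  simp
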